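/- Let ε, γ, λ be positive real numbers such that ε ≤ 8γ³λ, and let a < b be real numbers such that a·γ·λ/(2π) and b·γ·λ/(2π) are natural numbers. Then the function w := w_{ε,γ,λ} (with parameter a) satisfies the differential equation w''(t) + λ²·(γ² − φ_{ε,γ,λ}(t))·w(t) = 0 for every t ∈ [a,b], together with w(a) = 0, w'(a) = 1, w(b) = 0, and w'(b) = exp(ε·(b−a)/(16γ²)). -/

import Mathlib

open Set Filter

/-- The building-block perturbation
`φ_{ε,γ,λ}(t) = (ε/(4γλ)) sin(2γλt) + (ε²/(64γ⁴λ²)) sin⁴(γλt)`. -/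
noncomputable def phiF (ε γ lam t : ℝ) : ℝ :=
  ε / (4 * γ * lam) * Real.sin (2 * γ * lam * t) +
    ε ^ 2 / (64 * γ ^ 4 * lam ^ 2) * (Real.sin (γ * lam * t)) ^ 4

/-- The building-block solution
`w_{ε,γ,λ}(t) = (1/(γλ)) sin(γλt) exp((ε/(16γ²))(t-a) - (ε/(32γ³λ)) sin(2γλt))`. -/
noncomputable def wF (ε γ lam a t : ℝ) : ℝ :=
  1 / (γ * lam) * Real.sin (γ * lam * t) *
    Real.exp (ε / (16 * γ ^ 2) * (t - a) - ε / (32 * γ ^ 3 * lam) * Real.sin (2 * γ * lam * t))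

noncomputable def w1F (ε γ lam a t : ℝ) : ℝ :=
  Real.exp (ε / (16 * γ ^ 2) * (t - a) - ε / (32 * γ ^ 3 * lam) * Real.sin (2 * γ * lam * t)) *
    (Real.cos (γ * lam * t) + ε / (8 * γ ^ 3 * lam) * Real.sin (γ * lam * t) ^ 3)

lemma hasDerivAt_g (ε γ lam a t : ℝ) :
    HasDerivAt (fun s => ε / (16 * γ ^ 2) * (s - a) - ε / (32 * γ ^ 3 * lam) * Real.sin (2 * γ * lam * s))
      (ε / (16 * γ ^ 2) - ε / (32 * γ ^ 3 * lam) * (Real.cos (2 * γ * lam * t) * (2 * γ * lam))) t := by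
  have h1 : HasDerivAt (fun s : ℝ => ε / (16 * γ ^ 2) * (s - a)) (ε / (16 * γ ^ 2) * 1) t :=
    ((hasDerivAt_id t).sub_const a).const_mul _
  have h2 : HasDerivAt (fun s : ℝ => 2 * γ * lam * s) (2 * γ * lam) t := by
    simpa using (hasDerivAt_id t).const_mul (2 * γ * lam)
  have h3 := (Real.hasDerivAt_sin (2 * γ * lam * t)).comp t h2
  have h := h1.sub (h3.const_mul (ε / (32 * γ ^ 3 * lam))); rw [mul_one] at h; exact h

lemma hasDerivAt_wF (ε γ lam a : ℝ) (hγ : γ ≠ 0) (hlam : lam ≠ 0) (t : ℝ) :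
    HasDerivAt (wF ε γ lam a) (w1F ε γ lam a t) t := by
  have h2 : HasDerivAt (fun s : ℝ => γ * lam * s) (γ * lam) t := by
    simpa using (hasDerivAt_id t).const_mul (γ * lam)
  have h3 := (Real.hasDerivAt_sin (γ * lam * t)).comp t h2
  have h4 : HasDerivAt (fun s : ℝ => 1 / (γ * lam) * Real.sin (γ * lam * s))
      (1 / (γ * lam) * (Real.cos (γ * lam * t) * (γ * lam))) t := h3.const_mul _
  have hg := (hasDerivAt_g ε γ lam a t).exp
  have := h4.mul hg
  unfold wF w1F
  refine this.congr_deriv ?_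
  have hc2 : Real.cos (2 * γ * lam * t) = 1 - 2 * Real.sin (γ * lam * t) ^ 2 := by
    have : 2 * γ * lam * t = 2 * (γ * lam * t) := by ring
    rw [this, Real.cos_two_mul]; have h := Real.sin_sq_add_cos_sq (γ * lam * t); linarith
  rw [hc2]
  field_simp
  ring

lemma hasDerivAt_w1F (ε γ lam a : ℝ) (hγ : γ ≠ 0) (hlam : lam ≠ 0) (t : ℝ) :
    HasDerivAt (w1F ε γ lam a)
      (-(lam ^ 2 * (γ ^ 2 - phiF ε γ lam t) * wF ε γ lam a t)) t := by
  have h2 : HasDerivAt (fun s : ℝ => γ * lam * s) (γ * lam) t := by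
    simpa using (hasDerivAt_id t).const_mul (γ * lam)
  have hcos := (Real.hasDerivAt_cos (γ * lam * t)).comp t h2
  have hsin := (Real.hasDerivAt_sin (γ * lam * t)).comp t h2
  have hsin3 := (hsin.pow 3).const_mul (ε / (8 * γ ^ 3 * lam))
  have hg := (hasDerivAt_g ε γ lam a t).exp
  have := hg.mul (hcos.add hsin3)
  unfold w1F wF phiF
  refine this.congr_deriv ?_
  have hc2 : Real.cos (2 * γ * lam * t) = 1 - 2 * Real.sin (γ * lam * t) ^ 2 := by
    have : 2 * γ * lam * t = 2 * (γ * lam * t) := by ring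
    rw [this, Real.cos_two_mul]; have h := Real.sin_sq_add_cos_sq (γ * lam * t); linarith
  have hs2 : Real.sin (2 * γ * lam * t) = 2 * Real.sin (γ * lam * t) * Real.cos (γ * lam * t) := by
    have : 2 * γ * lam * t = 2 * (γ * lam * t) := by ring
    rw [this, Real.sin_two_mul]
  rw [hc2, hs2]
  simp only [Pi.add_apply, Pi.pow_apply, Function.comp_apply]
  field_simp
  ring

lemma sin_eq_zero_of_nat (x : ℝ) (n : ℕ) (h : x = n * (2 * Real.pi)) : Real.sin x = 0 := by
  have : x = ((2 * n : ℕ) : ℝ) * Real.pi := by push_cast; rw [h]; ring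
  rw [this]; exact Real.sin_nat_mul_pi _

/-- Lemma "Basic block", statement (3):
`w = w_{ε,γ,λ}` solves `w'' + λ²(γ² - φ_{ε,γ,λ}(t)) w = 0` on `[a,b]` with the indicated
initial and final data. -/
theorem wF_solves_ode
    (ε γ lam a b : ℝ) (hε : 0 < ε) (hγ : 0 < γ) (hlam : 0 < lam)
    (h8 : ε ≤ 8 * γ ^ 3 * lam) (hab : a < b)
    (haN : ∃ n : ℕ, a * γ * lam / (2 * Real.pi) = n)
    (hbN : ∃ n : ℕ, b * γ * lam / (2 * Real.pi) = n) :
    (∀ t ∈ Icc a b,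
      HasDerivWithinAt (wF ε γ lam a)
        (derivWithin (wF ε γ lam a) (Icc a b) t) (Icc a b) t ∧
      HasDerivWithinAt (fun s => derivWithin (wF ε γ lam a) (Icc a b) s)
        (-(lam ^ 2 * (γ ^ 2 - phiF ε γ lam t) * wF ε γ lam a t)) (Icc a b) t) ∧
    wF ε γ lam a a = 0 ∧
    derivWithin (wF ε γ lam a) (Icc a b) a = 1 ∧
    wF ε γ lam a b = 0 ∧
    derivWithin (wF ε γ lam a) (Icc a b) b = Real.exp (ε * (b - a) / (16 * γ ^ 2)) := by
  have hγ' : γ ≠ 0 := hγ.ne'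
  have hlam' : lam ≠ 0 := hlam.ne'
  have hud := uniqueDiffOn_Icc hab
  have hdw : ∀ t ∈ Icc a b, derivWithin (wF ε γ lam a) (Icc a b) t = w1F ε γ lam a t :=
    fun t ht => (hasDerivAt_wF ε γ lam a hγ' hlam' t).hasDerivWithinAt.derivWithin (hud t ht)
  obtain ⟨n, hn⟩ := haN
  obtain ⟨m, hm⟩ := hbN
  have hpi : (2 * Real.pi) ≠ 0 := by positivity
  rw [div_eq_iff hpi] at hn hm
  have hsa : Real.sin (γ * lam * a) = 0 :=
    sin_eq_zero_of_nat _ n (by linarith [hn])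
  have hsb : Real.sin (γ * lam * b) = 0 :=
    sin_eq_zero_of_nat _ m (by linarith [hm])
  have hs2a : Real.sin (2 * γ * lam * a) = 0 :=
    sin_eq_zero_of_nat _ (2 * n) (by push_cast; nlinarith [hn])
  have hs2b : Real.sin (2 * γ * lam * b) = 0 :=
    sin_eq_zero_of_nat _ (2 * m) (by push_cast; nlinarith [hm])
  have hca : Real.cos (γ * lam * a) = 1 := by
    have : γ * lam * a = (n : ℝ) * (2 * Real.pi) := by linarith [hn]
    rw [this]; exact Real.cos_nat_mul_two_pi n
  have hcb : Real.cos (γ * lam * b) = 1 := by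
    have : γ * lam * b = (m : ℝ) * (2 * Real.pi) := by linarith [hm]
    rw [this]; exact Real.cos_nat_mul_two_pi m
  have hamem : a ∈ Icc a b := ⟨le_refl a, hab.le⟩
  have hbmem : b ∈ Icc a b := ⟨hab.le, le_refl b⟩
  refine ⟨fun t ht => ⟨?_, ?_⟩, ?_, ?_, ?_, ?_⟩
  · rw [hdw t ht]
    exact (hasDerivAt_wF ε γ lam a hγ' hlam' t).hasDerivWithinAt
  · exact ((hasDerivAt_w1F ε γ lam a hγ' hlam' t).hasDerivWithinAt).congr
      (fun s hs => hdw s hs) (hdw t ht)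
  · unfold wF; rw [hsa]; ring
  · rw [hdw a hamem]; unfold w1F; rw [hsa, hs2a, hca]; simp
  · unfold wF; rw [hsb]; ring
  · rw [hdw b hbmem]; unfold w1F; rw [hsb, hs2b, hcb]
    norm_num
    ring_nf
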